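/- Let m ≥ 2, 1 ≤ k ≤ m, let a^1, …, a^m ∈ ℝ^n, let F be a nonempty compact convex subset of ℝ^n with 0 ∈ int(F) and Minkowski gauge ρ_F, and let f_F(x^1, …, x^k) = Σ_{i=1}^m min_{ℓ=1,…,k} ρ_F(x^ℓ − a^i) on (ℝ^n)^k. Fix an index i₀ ∈ {1,…,m} and set ρ = max_{i=1,…,m} ρ_F(a^{i₀} − a^i). Then for every x = (x^1,…,x^k) ∈ (ℝ^n)^k there exists x̃ = (x̃^1,…,x̃^k) with ρ_F(x̃^ℓ − a^{i₀}) ≤ (1 + ‖F‖‖F°‖)·ρ for every ℓ = 1,…,k and f_F(x̃) ≤ f_F(x), where ‖F‖ = sup{‖y‖ : y ∈ F} and ‖F°‖ = sup{‖v‖ : v ∈ F°} with F° the polar set of F. -/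

import Mathlib

open scoped RealInnerProductSpace

/-- The polar set `F° = {v : ⟨v,x⟩ ≤ 1 for all x ∈ F}`. -/
def polarSet {n : ℕ} (F : Set (EuclideanSpace ℝ (Fin n))) : Set (EuclideanSpace ℝ (Fin n)) :=
  {v | ∀ y ∈ F, ⟪v, y⟫ ≤ 1}

/-- `‖F‖ = sup {‖x‖ : x ∈ F}`. -/
noncomputable def setNorm {n : ℕ} (F : Set (EuclideanSpace ℝ (Fin n))) : ℝ :=
  sSup ((fun y => ‖y‖) '' F)

/-- `min_{ℓ=1,…,k} ρ_F(x^ℓ − p)`. -/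
noncomputable def minGauge {n k : ℕ} (hk : 0 < k) (F : Set (EuclideanSpace ℝ (Fin n)))
    (x : Fin k → EuclideanSpace ℝ (Fin n)) (p : EuclideanSpace ℝ (Fin n)) : ℝ :=
  Finset.univ.inf' ⟨⟨0, hk⟩, Finset.mem_univ _⟩ fun ℓ => gauge F (x ℓ - p)

/-- The generalized multi-source Weber objective
`f_F(x) = Σ_i min_ℓ ρ_F(x^ℓ − a^i)`. -/
noncomputable def weberObj {n m k : ℕ} (hk : 0 < k) (F : Set (EuclideanSpace ℝ (Fin n)))
    (a : Fin m → EuclideanSpace ℝ (Fin n)) (x : Fin k → EuclideanSpace ℝ (Fin n)) : ℝ :=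
  ∑ i, minGauge hk F x (a i)

section Aux

variable {n : ℕ} {F : Set (EuclideanSpace ℝ (Fin n))}

/-- Separation: a point outside a closed convex set containing the origin is separated by
a polar vector. -/
lemma exists_polar_gt (hcomp : IsCompact F) (hconv : Convex ℝ F)
    (h0 : (0 : EuclideanSpace ℝ (Fin n)) ∈ F) {z : EuclideanSpace ℝ (Fin n)} (hz : z ∉ F) :
    ∃ v ∈ polarSet F, 1 < ⟪v, z⟫ := by
  obtain ⟨f, u, hf, hfz⟩ := geometric_hahn_banach_closed_point hconv hcomp.isClosed hz
  have hu : 0 < u := by simpa using hf 0 h0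
  refine ⟨(InnerProductSpace.toDual ℝ _).symm (u⁻¹ • f), ?_, ?_⟩
  · intro y hy
    rw [InnerProductSpace.toDual_symm_apply]
    have := hf y hy
    calc (u⁻¹ • f) y = u⁻¹ * f y := rfl
      _ ≤ u⁻¹ * u := mul_le_mul_of_nonneg_left this.le (by positivity)
      _ = 1 := inv_mul_cancel₀ hu.ne'
  · rw [InnerProductSpace.toDual_symm_apply]
    have : u⁻¹ * u < u⁻¹ * f z := by
      apply mul_lt_mul_of_pos_left hfz (by positivity)
    calc (1:ℝ) = u⁻¹ * u := (inv_mul_cancel₀ hu.ne').symm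
      _ < u⁻¹ * f z := this
      _ = (u⁻¹ • f) z := rfl

end Aux

lemma norm_scale_aux {n : ℕ} (v : EuclideanSpace ℝ (Fin n)) (hv : v ≠ 0) {t : ℝ}
    (ht : 0 < t) : ‖(t * ‖v‖⁻¹) • v‖ = t := by
  have h : (0:ℝ) < ‖v‖ := norm_pos_iff.mpr hv
  rw [norm_smul, Real.norm_eq_abs, abs_of_pos (mul_pos ht (inv_pos.mpr h))]
  field_simp

theorem stmt3 (n m k : ℕ) (hm : 2 ≤ m) (hk : 1 ≤ k) (hkm : k ≤ m)
    (a : Fin m → EuclideanSpace ℝ (Fin n))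
    (F : Set (EuclideanSpace ℝ (Fin n)))
    (hne : F.Nonempty) (hcomp : IsCompact F) (hconv : Convex ℝ F)
    (h0 : (0 : EuclideanSpace ℝ (Fin n)) ∈ interior F)
    (i₀ : Fin m) (ρ : ℝ)
    (hρ : ρ = Finset.univ.sup' ⟨i₀, Finset.mem_univ i₀⟩ fun i => gauge F (a i₀ - a i))
    (x : Fin k → EuclideanSpace ℝ (Fin n)) :
    ∃ xt : Fin k → EuclideanSpace ℝ (Fin n),
      (∀ ℓ, gauge F (xt ℓ - a i₀) ≤ (1 + setNorm F * setNorm (polarSet F)) * ρ) ∧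
        weberObj hk F a xt ≤ weberObj hk F a x := by
  -- trivial case: everything is zero
  rcases subsingleton_or_nontrivial (EuclideanSpace ℝ (Fin n)) with hsub | hnt
  · refine ⟨x, fun ℓ => ?_, le_refl _⟩
    have h1 : x ℓ - a i₀ = 0 := Subsingleton.elim _ _
    have h2 : ρ = 0 := by
      rw [hρ]
      have : ∀ i : Fin m, gauge F (a i₀ - a i) = 0 := fun i => by
        rw [Subsingleton.elim (a i₀ - a i) (0 : EuclideanSpace ℝ (Fin n)), gauge_zero]
      simp [this]
      exact Finset.sup'_const _ _
    simp [h1, h2, gauge_zero]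
  -- nontrivial case
  have h0F : (0 : EuclideanSpace ℝ (Fin n)) ∈ F := interior_subset h0
  have hFnhds : F ∈ nhds (0 : EuclideanSpace ℝ (Fin n)) := mem_interior_iff_mem_nhds.mp h0
  have habs : Absorbent ℝ F := absorbent_nhds_zero hFnhds
  obtain ⟨ε, hε, hball⟩ := Metric.mem_nhds_iff.mp hFnhds
  set c1 := setNorm F with hc1def
  set c2 := setNorm (polarSet F) with hc2def
  -- boundedness of F
  obtain ⟨R, hR⟩ := hcomp.isBounded.subset_closedBall 0
  have hbddF : BddAbove ((fun y => ‖y‖) '' F) := by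
    refine ⟨R, ?_⟩
    rintro r ⟨y, hy, rfl⟩
    simpa using hR hy
  have hc1 : ∀ y ∈ F, ‖y‖ ≤ c1 := fun y hy => le_csSup hbddF ⟨y, hy, rfl⟩
  -- boundedness of the polar
  have hbddP : BddAbove ((fun y => ‖y‖) '' polarSet F) := by
    refine ⟨2 / ε, ?_⟩
    rintro r ⟨v, hv, rfl⟩
    rcases eq_or_ne v 0 with rfl | hv0
    · simp; positivity
    · have hvpos : (0:ℝ) < ‖v‖ := norm_pos_iff.mpr hv0
      have hyF : ((ε / 2) * ‖v‖⁻¹) • v ∈ F := by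
        apply hball
        simp only [Metric.mem_ball, dist_zero_right]
        rw [norm_scale_aux v hv0 (by positivity)]
        linarith
      have h1 := hv _ hyF
      rw [real_inner_smul_right, real_inner_self_eq_norm_sq] at h1
      have h2 : ε / 2 * ‖v‖ ≤ 1 := by
        have : ‖v‖⁻¹ * ‖v‖ ^ 2 = ‖v‖ := by field_simp
        nlinarith [h1, this]
      show ‖v‖ ≤ 2 / ε
      rw [le_div_iff₀ hε]
      nlinarith
  have h0P : (0 : EuclideanSpace ℝ (Fin n)) ∈ polarSet F := fun y _ => by simp
  have hc2 : ∀ v ∈ polarSet F, ‖v‖ ≤ c2 := fun v hv => le_csSup hbddP ⟨v, hv, rfl⟩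
  -- positivity of c1
  obtain ⟨z₀, hz₀⟩ := exists_ne (0 : EuclideanSpace ℝ (Fin n))
  have hc1pos : 0 < c1 := by
    have hmem : ((ε / 2) * ‖z₀‖⁻¹) • z₀ ∈ F := by
      apply hball
      simp only [Metric.mem_ball, dist_zero_right]
      rw [norm_scale_aux z₀ hz₀ (by positivity)]
      linarith
    have h1 := hc1 _ hmem
    rw [norm_scale_aux z₀ hz₀ (by positivity)] at h1
    linarith
  -- positivity of c2
  have hc2pos : 0 < c2 := by
    have hvP : (c1⁻¹ * ‖z₀‖⁻¹) • z₀ ∈ polarSet F := by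
      intro y hy
      have h1 : ⟪(c1⁻¹ * ‖z₀‖⁻¹) • z₀, y⟫ ≤ ‖(c1⁻¹ * ‖z₀‖⁻¹) • z₀‖ * ‖y‖ :=
        real_inner_le_norm _ _
      rw [norm_scale_aux z₀ hz₀ (inv_pos.mpr hc1pos)] at h1
      have := hc1 y hy
      calc ⟪(c1⁻¹ * ‖z₀‖⁻¹) • z₀, y⟫ ≤ c1⁻¹ * ‖y‖ := h1
        _ ≤ c1⁻¹ * c1 := by
            apply mul_le_mul_of_nonneg_left this (by positivity)
        _ = 1 := inv_mul_cancel₀ hc1pos.ne'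
    have h1 := hc2 _ hvP
    rw [norm_scale_aux z₀ hz₀ (inv_pos.mpr hc1pos)] at h1
    have : (0:ℝ) < c1⁻¹ := inv_pos.mpr hc1pos
    linarith
  -- Lemma A : ‖z‖ ≤ c1 * gauge F z
  have lemA : ∀ z : EuclideanSpace ℝ (Fin n), ‖z‖ ≤ c1 * gauge F z := by
    intro z
    have hsub : F ⊆ Metric.closedBall 0 c1 := fun y hy => by
      simpa using hc1 y hy
    have := gauge_mono habs hsub z
    rw [gauge_closedBall hc1pos.le] at this
    rw [div_le_iff₀ hc1pos] at this
    linarith [this]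
  -- ball (1/c2) ⊆ F
  have hballP : Metric.ball (0 : EuclideanSpace ℝ (Fin n)) (1 / c2) ⊆ F := by
    intro z hz
    by_contra hzF
    obtain ⟨v, hvP, hv1⟩ := exists_polar_gt hcomp hconv h0F hzF
    have h1 : ⟪v, z⟫ ≤ ‖v‖ * ‖z‖ := real_inner_le_norm _ _
    have h2 := hc2 v hvP
    have h3 : ‖z‖ < 1 / c2 := by simpa using hz
    have h4 : ‖v‖ * ‖z‖ ≤ c2 * ‖z‖ :=
      mul_le_mul_of_nonneg_right h2 (norm_nonneg _)
    have h5 : c2 * ‖z‖ < c2 * (1 / c2) := mul_lt_mul_of_pos_left h3 hc2pos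
    rw [mul_one_div, div_self hc2pos.ne'] at h5
    linarith
  -- Lemma B : gauge F z ≤ c2 * ‖z‖
  have lemB : ∀ z : EuclideanSpace ℝ (Fin n), gauge F z ≤ c2 * ‖z‖ := by
    intro z
    have h1 := gauge_mono (absorbent_ball_zero (by positivity : (0:ℝ) < 1 / c2)) hballP z
    rw [gauge_ball (by positivity : (0:ℝ) ≤ 1 / c2)] at h1
    rw [div_div_eq_mul_div, div_one] at h1
    linarith [h1]
  -- key: gauge F (-z) ≤ c1*c2 * gauge F z
  have key : ∀ z : EuclideanSpace ℝ (Fin n), gauge F (-z) ≤ c1 * c2 * gauge F z := by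
    intro z
    calc gauge F (-z) ≤ c2 * ‖-z‖ := lemB _
      _ = c2 * ‖z‖ := by rw [norm_neg]
      _ ≤ c2 * (c1 * gauge F z) :=
          mul_le_mul_of_nonneg_left (lemA z) hc2pos.le
      _ = c1 * c2 * gauge F z := by ring
  -- properties of ρ
  have hρ' : ∀ i : Fin m, gauge F (a i₀ - a i) ≤ ρ := by
    intro i; rw [hρ]
    exact Finset.le_sup' (fun j => gauge F (a i₀ - a j)) (Finset.mem_univ i)
  have hρ0 : 0 ≤ ρ := (gauge_nonneg _).trans (hρ' i₀)
  set K := (1 + c1 * c2) with hKdef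
  have hKpos : 0 < K := by positivity
  -- the construction
  set xt : Fin k → EuclideanSpace ℝ (Fin n) := fun ℓ => if gauge F (x ℓ - a i₀) ≤ K * ρ then x ℓ else a i₀ with hxt
  refine ⟨xt, ?_, ?_⟩
  · intro ℓ
    simp only [hxt]
    split_ifs with h
    · exact h
    · simp only [sub_self, gauge_zero]
      positivity
  · -- pointwise bound
    have hpt : ∀ (ℓ : Fin k) (i : Fin m), gauge F (xt ℓ - a i) ≤ gauge F (x ℓ - a i) := by
      intro ℓ i
      simp only [hxt]
      split_ifs with h
      · exact le_refl _
      · push_neg at h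
        -- gauge (a i₀ - a i) ≤ ρ ≤ gauge (x ℓ - a i)
        have hsum : gauge F (x ℓ - a i₀) ≤ gauge F (x ℓ - a i) + gauge F (a i - a i₀) := by
          have := gauge_add_le hconv habs (x ℓ - a i) (a i - a i₀)
          rw [sub_add_sub_cancel] at this
          exact this
        have hneg : gauge F (a i - a i₀) ≤ c1 * c2 * ρ := by
          have h1 : a i - a i₀ = -(a i₀ - a i) := by abel
          rw [h1]
          calc gauge F (-(a i₀ - a i)) ≤ c1 * c2 * gauge F (a i₀ - a i) := key _
            _ ≤ c1 * c2 * ρ := by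
                apply mul_le_mul_of_nonneg_left (hρ' i) (by positivity)
        have : ρ ≤ gauge F (x ℓ - a i) := by
          have := hsum
          rw [hKdef] at h
          nlinarith [h, hsum, hneg]
        exact (hρ' i).trans this
    -- sum over i
    unfold weberObj
    apply Finset.sum_le_sum
    intro i _
    unfold minGauge
    apply Finset.le_inf'
    intro ℓ _
    exact (Finset.inf'_le _ (Finset.mem_univ ℓ)).trans (hpt ℓ i)
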